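/- With the notation of the Newton–Puiseux factorization setup, set A = { i : ord_t(φ_i − φ_γ) ≥ Mξ }. Then the polynomial P_{f,γ,ξ} has at least two distinct complex roots if and only if there exist indices i ≠ j in A with ord_t(φ_i − φ_j) = Mξ; equivalently, the horn-neighbourhood of γ of exponent ξ is a root horn, i.e. it coincides with the horn H_A' of a bunch A' of Newton–Puiseux roots of f with height h(A') = ξ. In this case the multiplicity of the bunch equals the degree of the polynomial: m_{A'} = |A| = deg P_{f,γ,ξ}. (Proposition 7.1 of the paper, characterizing root horns.) -/

import Mathlib

/-!  Setup (Proposition 7.1 of the paper).  `f : (ℝ²,0) → (ℝ,0)` is mini-regular in `x` of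
order `m`, and `f(x, t^M) = U(x,t)·∏ᵢ (x − φᵢ(t))` is a Newton–Puiseux factorization, with
`U(x,t) = Σₙ Uₙ(t) xⁿ` analytic, `U(0,0) ≠ 0`, and `φ₁, …, φ_m` complex power series vanishing
at `0`.  Here the factorized data `U, φ` is taken as the primitive datum.  For a real demi-branch
`x = λ(y)` with `φγ(t) = λ(t^M)` and a rational `ξ > 1` with `e = Mξ ∈ ℕ`, the expansion
`f(φγ(t) + z·t^e, t^M) = Σ_k F_k(z) t^k` is the power series `Gser` below, with coefficients
`F_k ∈ ℂ[z]`; `N = min{k : F_k ≠ 0}` and `P_{f,γ,ξ} = F_N`. -/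

/-- Substitution of a power series `q` with vanishing constant term for `x` in
`U(x,t) = Σₙ Uₙ(t) xⁿ` (the truncated sum is the full one since `ord qⁿ ≥ n`). -/
noncomputable def substX (U : ℕ → PowerSeries ℂ) (q : PowerSeries (Polynomial ℂ)) :
    PowerSeries (Polynomial ℂ) :=
  PowerSeries.mk fun k => ∑ n ∈ Finset.range (k + 1),
    PowerSeries.coeff k
      (PowerSeries.map (Polynomial.C : ℂ →+* Polynomial ℂ) (U n) * q ^ n)

/-- The complexification of the real power series `φγ`. -/
noncomputable def cxify (φγ : PowerSeries ℝ) : PowerSeries ℂ :=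
  PowerSeries.map (algebraMap ℝ ℂ) φγ

/-- `xsub = φγ(t) + z·t^e`, as a power series in `t` with coefficients in `ℂ[z]`. -/
noncomputable def xsub (φγ : PowerSeries ℝ) (e : ℕ) : PowerSeries (Polynomial ℂ) :=
  PowerSeries.map (Polynomial.C : ℂ →+* Polynomial ℂ) (cxify φγ)
    + PowerSeries.monomial e (Polynomial.X : Polynomial ℂ)

/-- `Gser = U(xsub, t) · ∏ᵢ (xsub − φᵢ(t)) = f(φγ(t) + z t^e, t^M) = Σ_k F_k(z) t^k`. -/
noncomputable def Gser (m : ℕ) (U : ℕ → PowerSeries ℂ) (φ : Fin m → PowerSeries ℂ)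
    (φγ : PowerSeries ℝ) (e : ℕ) : PowerSeries (Polynomial ℂ) :=
  substX U (xsub φγ e) *
    ∏ i : Fin m, (xsub φγ e - PowerSeries.map (Polynomial.C : ℂ →+* Polynomial ℂ) (φ i))

open scoped Classical in
/-- `A = {i : ord (φᵢ − φγ) ≥ e}`. -/
noncomputable def Aset (m e : ℕ) (φ : Fin m → PowerSeries ℂ) (φγ : PowerSeries ℝ) :
    Finset (Fin m) :=
  Finset.univ.filter fun i =>
    ∀ n < e, PowerSeries.coeff n (φ i) = PowerSeries.coeff n (cxify φγ)

/-- For `i ∈ A`, the coefficient `cᵢ` of `t^e` in `φᵢ − φγ`. -/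
noncomputable def cCoeff (e : ℕ) {m : ℕ} (φ : Fin m → PowerSeries ℂ) (φγ : PowerSeries ℝ)
    (i : Fin m) : ℂ :=
  PowerSeries.coeff e (φ i) - PowerSeries.coeff e (cxify φγ)

/-- For `i ∉ A`, the order `ord (φᵢ − φγ)`. -/
noncomputable def dOrd {m : ℕ} (φ : Fin m → PowerSeries ℂ) (φγ : PowerSeries ℝ)
    (i : Fin m) : ℕ :=
  sInf {n : ℕ | PowerSeries.coeff n (φ i) ≠ PowerSeries.coeff n (cxify φγ)}

/-- For `i ∉ A`, the leading coefficient `bᵢ` of `φγ − φᵢ`. -/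
noncomputable def bCoeff {m : ℕ} (φ : Fin m → PowerSeries ℂ) (φγ : PowerSeries ℝ)
    (i : Fin m) : ℂ :=
  PowerSeries.coeff (dOrd φ φγ i) (cxify φγ) - PowerSeries.coeff (dOrd φ φγ i) (φ i)

/-- `N = min{k : F_k ≠ 0}`. -/
noncomputable def Nord (m : ℕ) (U : ℕ → PowerSeries ℂ) (φ : Fin m → PowerSeries ℂ)
    (φγ : PowerSeries ℝ) (e : ℕ) : ℕ :=
  sInf {k : ℕ | PowerSeries.coeff k (Gser m U φ φγ e) ≠ 0}

/-- `P_{f,γ,ξ} = F_N`. -/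
noncomputable def Ppoly (m : ℕ) (U : ℕ → PowerSeries ℂ) (φ : Fin m → PowerSeries ℂ)
    (φγ : PowerSeries ℝ) (e : ℕ) : Polynomial ℂ :=
  PowerSeries.coeff (Nord m U φ φγ e) (Gser m U φ φγ e)

/-- `ord (φᵢ − φⱼ) ≥ e`, i.e. the contact order of the two Newton–Puiseux roots is `≥ ξ = e/M`. -/
def OrdGE {m : ℕ} (φ : Fin m → PowerSeries ℂ) (e : ℕ) (i j : Fin m) : Prop :=
  ∀ n < e, PowerSeries.coeff n (φ i) = PowerSeries.coeff n (φ j)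

/-- `S` is a bunch of Newton–Puiseux roots of height `ξ = e/M`: a maximal set of at least two
roots with pairwise contact orders `≥ ξ`, the minimum of these contact orders being exactly
`ξ`.  (Its horn `H_S` is the horn-neighbourhood of exponent `ξ` of any demi-branch agreeing
with the common truncation of the roots of `S` below the exponent `ξ`, and its multiplicity
`m_S` is the number of roots in `S`.) -/
def IsBunch {m : ℕ} (φ : Fin m → PowerSeries ℂ) (e : ℕ) (S : Finset (Fin m)) : Prop :=
  2 ≤ S.card ∧
  (∀ i ∈ S, ∀ j ∈ S, OrdGE φ e i j) ∧
  (∃ i ∈ S, ∃ j ∈ S, PowerSeries.coeff e (φ i) ≠ PowerSeries.coeff e (φ j)) ∧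
  ∀ i ∉ S, ∃ j ∈ S, ¬ OrdGE φ e i j

lemma mem_Aset_iff {m e : ℕ} {φ : Fin m → PowerSeries ℂ} {φγ : PowerSeries ℝ} {i : Fin m} :
    i ∈ Aset m e φ φγ ↔
      ∀ n < e, PowerSeries.coeff n (φ i) = PowerSeries.coeff n (cxify φγ) := by
  classical
  simp [Aset]

lemma coeff_G {m : ℕ} (φ : Fin m → PowerSeries ℂ) (φγ : PowerSeries ℝ) (e : ℕ) (i : Fin m)
    (n : ℕ) :
    PowerSeries.coeff n
        (xsub φγ e - PowerSeries.map (Polynomial.C : ℂ →+* Polynomial ℂ) (φ i))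
      = Polynomial.C (PowerSeries.coeff n (cxify φγ) - PowerSeries.coeff n (φ i))
        + (if n = e then Polynomial.X else 0) := by
  simp only [xsub, map_sub, map_add, PowerSeries.coeff_map, PowerSeries.coeff_monomial,
    Polynomial.C_sub]
  ring

lemma coeff_zero_substX (U : ℕ → PowerSeries ℂ) (q : PowerSeries (Polynomial ℂ)) :
    PowerSeries.coeff 0 (substX U q)
      = Polynomial.C (PowerSeries.constantCoeff (U 0)) := by
  simp only [substX, PowerSeries.coeff_mk, zero_add, Finset.sum_range_one, pow_zero, mul_one,
    PowerSeries.coeff_map, PowerSeries.coeff_zero_eq_constantCoeff_apply]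
  exact MvPowerSeries.constantCoeff_map Polynomial.C (U 0)

lemma coeff_mul_lead' {R : Type*} [CommRing R] (f g : PowerSeries R) (a b : ℕ)
    (hf : ∀ n < a, PowerSeries.coeff n f = 0)
    (hg : ∀ n < b, PowerSeries.coeff n g = 0) :
    (∀ n < a + b, PowerSeries.coeff n (f * g) = 0) ∧
      PowerSeries.coeff (a + b) (f * g)
        = PowerSeries.coeff a f * PowerSeries.coeff b g := by
  constructor
  · intro n hn
    rw [PowerSeries.coeff_mul]
    apply Finset.sum_eq_zero
    rintro ⟨p, q⟩ hpq
    rw [Finset.HasAntidiagonal.mem_antidiagonal] at hpq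
    rcases lt_or_ge p a with h | h
    · rw [hf p h, zero_mul]
    · have : q < b := by omega
      rw [hg q this, mul_zero]
  · rw [PowerSeries.coeff_mul]
    rw [Finset.sum_eq_single (a, b)]
    · rintro ⟨p, q⟩ hpq hne
      rw [Finset.HasAntidiagonal.mem_antidiagonal] at hpq
      rcases lt_or_ge p a with h | h
      · rw [hf p h, zero_mul]
      · rcases eq_or_lt_of_le (show q ≤ b by omega) with h' | h'
        · exact absurd (by simp [← h']; omega : (p, q) = ((a : ℕ), b)) hne
        · rw [hg q h', mul_zero]
    · intro h; exact absurd (Finset.HasAntidiagonal.mem_antidiagonal.mpr (rfl : a + b = a + b)) h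

lemma coeff_prod_lead' {R : Type*} [CommRing R] {ι : Type*} [DecidableEq ι] (s : Finset ι)
    (f : ι → PowerSeries R) (a : ι → ℕ)
    (hf : ∀ i ∈ s, ∀ n < a i, PowerSeries.coeff n (f i) = 0) :
    (∀ n < ∑ i ∈ s, a i, PowerSeries.coeff n (∏ i ∈ s, f i) = 0) ∧
      PowerSeries.coeff (∑ i ∈ s, a i) (∏ i ∈ s, f i)
        = ∏ i ∈ s, PowerSeries.coeff (a i) (f i) := by
  induction s using Finset.induction_on with
  | empty => exact ⟨fun n hn => absurd hn (by simp), by simp⟩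
  | @insert x s' hx ih =>
      have h1 := ih (fun i hi => hf i (Finset.mem_insert_of_mem hi))
      have h2 := coeff_mul_lead' (f x) (∏ i ∈ s', f i) (a x) (∑ i ∈ s', a i)
        (hf x (Finset.mem_insert_self x s')) h1.1
      rw [Finset.prod_insert hx, Finset.sum_insert hx]
      exact ⟨h2.1, by rw [h2.2, h1.2, Finset.prod_insert hx]⟩

lemma not_mem_Aset {m e : ℕ} {φ : Fin m → PowerSeries ℂ} {φγ : PowerSeries ℝ} {i : Fin m}
    (hi : i ∉ Aset m e φ φγ) :
    dOrd φ φγ i < e ∧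
      PowerSeries.coeff (dOrd φ φγ i) (φ i) ≠ PowerSeries.coeff (dOrd φ φγ i) (cxify φγ) ∧
      ∀ n < dOrd φ φγ i,
        PowerSeries.coeff n (φ i) = PowerSeries.coeff n (cxify φγ) := by
  rw [mem_Aset_iff] at hi
  push_neg at hi
  obtain ⟨n, hn, hne⟩ := hi
  have hnonempty :
      {k : ℕ | PowerSeries.coeff k (φ i) ≠ PowerSeries.coeff k (cxify φγ)}.Nonempty :=
    ⟨n, hne⟩
  refine ⟨lt_of_le_of_lt (Nat.sInf_le hne) hn, Nat.sInf_mem hnonempty, ?_⟩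
  intro k hk
  by_contra hk'
  exact absurd (Nat.sInf_le (hk' : k ∈ _)) (not_le.mpr hk)

lemma Ppoly_structure (m e : ℕ) (U : ℕ → PowerSeries ℂ)
    (hU : PowerSeries.constantCoeff (U 0) ≠ 0)
    (φ : Fin m → PowerSeries ℂ) (φγ : PowerSeries ℝ) :
    ∃ d : ℂ, d ≠ 0 ∧ Ppoly m U φ φγ e
      = Polynomial.C d * ∏ i ∈ Aset m e φ φγ,
          (Polynomial.X - Polynomial.C (cCoeff e φ φγ i)) := by
  classical
  set A := Aset m e φ φγ with hA
  set G : Fin m → PowerSeries (Polynomial ℂ) :=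
    fun i => xsub φγ e - PowerSeries.map (Polynomial.C : ℂ →+* Polynomial ℂ) (φ i) with hG
  set a : Fin m → ℕ := fun i => if i ∈ A then e else dOrd φ φγ i with ha
  have hvan : ∀ i ∈ Finset.univ, ∀ n < a i,
      PowerSeries.coeff n (G i) = 0 := by
    intro i _ n hn
    simp only [hG]
    rw [coeff_G]
    by_cases hi : i ∈ A
    · simp only [ha, hi, if_pos] at hn
      have h1 := (mem_Aset_iff.mp hi) n hn
      simp [h1, Nat.ne_of_lt hn]
    · simp only [ha, hi, if_neg, if_false] at hn
      obtain ⟨hlt, _, hbelow⟩ := not_mem_Aset hi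
      have hne : n ≠ e := by omega
      simp [hbelow n hn, hne]
  have hlead : ∀ i, PowerSeries.coeff (a i) (G i)
      = if i ∈ A then Polynomial.X - Polynomial.C (cCoeff e φ φγ i)
        else Polynomial.C (bCoeff φ φγ i) := by
    intro i
    simp only [hG]
    by_cases hi : i ∈ A
    · simp only [ha, hi, if_pos, if_true]
      rw [coeff_G]
      simp only [eq_self_iff_true, if_true, cCoeff, Polynomial.C_sub]
      ring
    · simp only [ha, hi, if_neg, if_false]
      obtain ⟨hlt, _, _⟩ := not_mem_Aset hi
      rw [coeff_G]
      simp only [if_neg (Nat.ne_of_lt hlt), bCoeff, Polynomial.C_sub, add_zero]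
  obtain ⟨hPvan, hPlead⟩ := coeff_prod_lead' Finset.univ G a hvan
  set k0 := ∑ i, a i with hk0
  have hmul := coeff_mul_lead' (substX U (xsub φγ e)) (∏ i, G i) 0 k0
    (fun n hn => absurd hn (Nat.not_lt_zero n)) hPvan
  have hGser : Gser m U φ φγ e = substX U (xsub φγ e) * ∏ i, G i := rfl
  have hbne : ∀ i ∉ A, bCoeff φ φγ i ≠ 0 := by
    intro i hi
    obtain ⟨_, hne, _⟩ := not_mem_Aset hi
    exact sub_ne_zero.mpr (Ne.symm hne)
  set d : ℂ := PowerSeries.constantCoeff (U 0)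
      * ∏ i ∈ Finset.univ.filter (fun i => ¬ i ∈ A), bCoeff φ φγ i with hd
  have hdne : d ≠ 0 := by
    refine mul_ne_zero hU (Finset.prod_ne_zero_iff.mpr ?_)
    intro i hi
    exact hbne i (Finset.mem_filter.mp hi).2
  have hGlead : PowerSeries.coeff k0 (Gser m U φ φγ e)
      = Polynomial.C d * ∏ i ∈ A, (Polynomial.X - Polynomial.C (cCoeff e φ φγ i)) := by
    rw [hGser]
    have h2 := hmul.2
    rw [zero_add] at h2
    rw [h2, coeff_zero_substX, hPlead]
    have : ∀ i ∈ Finset.univ, PowerSeries.coeff (a i) (G i)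
        = if i ∈ A then Polynomial.X - Polynomial.C (cCoeff e φ φγ i)
          else Polynomial.C (bCoeff φ φγ i) := fun i _ => hlead i
    rw [Finset.prod_congr rfl this, Finset.prod_ite]
    rw [hd, map_mul, map_prod]
    have hfilter : Finset.univ.filter (fun i => i ∈ A) = A := by
      rw [Finset.filter_mem_eq_inter, Finset.univ_inter]
    rw [hfilter]
    ring
  have hGvan : ∀ n < k0, PowerSeries.coeff n (Gser m U φ φγ e) = 0 := by
    intro n hn
    rw [hGser]
    exact hmul.1 n (by omega)
  have hlead_ne : PowerSeries.coeff k0 (Gser m U φ φγ e) ≠ 0 := by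
    rw [hGlead]
    refine mul_ne_zero (by simpa using hdne) (Finset.prod_ne_zero_iff.mpr ?_)
    intro i _
    exact Polynomial.X_sub_C_ne_zero _
  have hN : Nord m U φ φγ e = k0 := by
    unfold Nord
    refine le_antisymm (Nat.sInf_le hlead_ne) (le_csInf ⟨k0, hlead_ne⟩ fun b hb => ?_)
    by_contra h
    push_neg at h
    exact hb (hGvan b h)
  exact ⟨d, hdne, by rw [Ppoly, hN, hGlead]⟩
/-- **Proposition 7.1.**  With `A = {i : ord(φᵢ − φγ) ≥ Mξ}` (`e = Mξ`), the polynomial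
`P_{f,γ,ξ}` has at least two distinct complex roots if and only if there are `i ≠ j` in `A`
with `ord (φᵢ − φⱼ) = Mξ`; equivalently, the horn-neighbourhood `H_ξ(γ)` is a root horn: it is
the horn `H_{A'}` of a bunch `A' ( = A)` of Newton–Puiseux roots of `f` of height
`h(A') = ξ`.  In this case the multiplicity of the bunch equals the degree of the polynomial:
`m_{A'} = |A| = deg P_{f,γ,ξ}`. -/
theorem prop71_root_horn_characterisation
    (m M e : ℕ) (hm : 0 < m) (hM : 0 < M) (he : M < e)
    (U : ℕ → PowerSeries ℂ) (hU : PowerSeries.constantCoeff (U 0) ≠ 0)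
    (φ : Fin m → PowerSeries ℂ) (hφ0 : ∀ i, PowerSeries.constantCoeff (φ i) = 0)
    (φγ : PowerSeries ℝ) (hφγ0 : PowerSeries.constantCoeff φγ = 0) :
    ((∃ z w : ℂ, z ≠ w ∧ (Ppoly m U φ φγ e).IsRoot z ∧ (Ppoly m U φ φγ e).IsRoot w) ↔
      ∃ i ∈ Aset m e φ φγ, ∃ j ∈ Aset m e φ φγ, i ≠ j ∧
        PowerSeries.coeff e (φ i) ≠ PowerSeries.coeff e (φ j)) ∧
    ((∃ z w : ℂ, z ≠ w ∧ (Ppoly m U φ φγ e).IsRoot z ∧ (Ppoly m U φ φγ e).IsRoot w) →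
      IsBunch φ e (Aset m e φ φγ) ∧
      (Aset m e φ φγ).card = (Ppoly m U φ φγ e).natDegree) := by
  classical
  obtain ⟨d, hdne, hP⟩ := Ppoly_structure m e U hU φ φγ
  set A := Aset m e φ φγ with hA
  set c := cCoeff e φ φγ with hc
  have hceq : ∀ i j : Fin m, c i = c j ↔
      PowerSeries.coeff e (φ i) = PowerSeries.coeff e (φ j) := by
    intro i j
    simp [hc, cCoeff, sub_left_inj]
  have hroot : ∀ z : ℂ, (Ppoly m U φ φγ e).IsRoot z ↔ ∃ i ∈ A, c i = z := by
    intro z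
    rw [Polynomial.IsRoot, hP, Polynomial.eval_mul, Polynomial.eval_C, Polynomial.eval_prod]
    simp only [Polynomial.eval_sub, Polynomial.eval_X, Polynomial.eval_C, mul_eq_zero]
    constructor
    · rintro (h | h)
      · exact absurd h hdne
      · obtain ⟨i, hi, hzero⟩ := Finset.prod_eq_zero_iff.mp h
        exact ⟨i, hi, (sub_eq_zero.mp hzero).symm⟩
    · rintro ⟨i, hi, hz⟩
      exact Or.inr (Finset.prod_eq_zero hi (sub_eq_zero.mpr hz.symm))
  have hiff : (∃ z w : ℂ, z ≠ w ∧ (Ppoly m U φ φγ e).IsRoot z ∧ (Ppoly m U φ φγ e).IsRoot w) ↔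
      ∃ i ∈ A, ∃ j ∈ A, i ≠ j ∧
        PowerSeries.coeff e (φ i) ≠ PowerSeries.coeff e (φ j) := by
    constructor
    · rintro ⟨z, w, hzw, hz, hw⟩
      obtain ⟨i, hi, hci⟩ := (hroot z).mp hz
      obtain ⟨j, hj, hcj⟩ := (hroot w).mp hw
      have hcij : c i ≠ c j := by rw [hci, hcj]; exact hzw
      refine ⟨i, hi, j, hj, ?_, fun h => hcij ((hceq i j).mpr h)⟩
      rintro rfl; exact hcij rfl
    · rintro ⟨i, hi, j, hj, hij, hco⟩
      exact ⟨c i, c j, fun h => hco ((hceq i j).mp h),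
        (hroot _).mpr ⟨i, hi, rfl⟩, (hroot _).mpr ⟨j, hj, rfl⟩⟩
  refine ⟨hiff, fun hex => ?_⟩
  obtain ⟨i0, hi0, j0, hj0, hij, hco⟩ := hiff.mp hex
  constructor
  · refine ⟨Finset.one_lt_card.mpr ⟨i0, hi0, j0, hj0, hij⟩, ?_, ⟨i0, hi0, j0, hj0, hco⟩, ?_⟩
    · intro i hi j hj n hn
      exact ((mem_Aset_iff.mp hi) n hn).trans ((mem_Aset_iff.mp hj) n hn).symm
    · intro i hi
      rw [hA, mem_Aset_iff] at hi
      push_neg at hi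
      obtain ⟨n, hn, hne⟩ := hi
      exact ⟨i0, hi0, fun h => hne ((h n hn).trans ((mem_Aset_iff.mp hi0) n hn))⟩
  · rw [hP, Polynomial.natDegree_C_mul hdne,
      Polynomial.natDegree_prod _ _ (fun i _ => Polynomial.X_sub_C_ne_zero _)]
    simp [Polynomial.natDegree_X_sub_C]
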